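/- For all real numbers b > 0 and c > 0 with b ≠ 1, the integral ∫₀^∞ (b·e^{-cr} − e^{-r})² r^{-1} dr diverges (equals +∞). -/

import Mathlib

open MeasureTheory Set

lemma lintegral_inv_Ioo_top {δ : ℝ} (hδ : 0 < δ) :
    ∫⁻ r in Ioo (0 : ℝ) δ, ENNReal.ofReal r⁻¹ = ⊤ := by
  by_contra h
  have hint : Integrable (fun r : ℝ => r⁻¹) (volume.restrict (Ioo 0 δ)) := by
    rw [← MeasureTheory.lintegral_ofReal_ne_top_iff_integrable]
    · exact h
    · exact (measurable_inv.aestronglyMeasurable)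
    · filter_upwards [ae_restrict_mem measurableSet_Ioo] with r hr
      exact (inv_pos.2 hr.1).le
  have : IntegrableOn (fun x : ℝ => x ^ (-1 : ℝ)) (Ioo (0:ℝ) δ) := by
    apply hint.congr
    filter_upwards [ae_restrict_mem measurableSet_Ioo] with r hr
    rw [Real.rpow_neg_one]
  rw [intervalIntegral.integrableOn_Ioo_rpow_iff hδ] at this
  linarith

/-- For `b, c > 0` with `b ≠ 1`, the integral `∫₀^∞ (b e^{-cr} − e^{-r})² r⁻¹ dr`
diverges (equals `+∞`). -/
theorem radial_integral_diverges (b c : ℝ) (hb : 0 < b) (hc : 0 < c) (hb1 : b ≠ 1) :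
    ∫⁻ r in Ioi (0 : ℝ),
        ENNReal.ofReal ((b * Real.exp (-(c * r)) - Real.exp (-r)) ^ 2 / r) = ⊤ := by
  set g : ℝ → ℝ := fun r => b * Real.exp (-(c * r)) - Real.exp (-r) with hg
  have hg0 : g 0 = b - 1 := by simp [hg]
  have hgc : ContinuousAt g 0 := by fun_prop
  have hbne : |b - 1| / 2 > 0 := by
    have : b - 1 ≠ 0 := sub_ne_zero.2 hb1
    positivity
  obtain ⟨δ, hδ, hδ'⟩ := Metric.continuousAt_iff.1 hgc (|b - 1| / 2) hbne
  have key : ∀ r ∈ Ioo (0:ℝ) δ, (|b - 1| / 2) ^ 2 / r ≤ g r ^ 2 / r := by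
    intro r hr
    apply div_le_div_of_nonneg_right _ hr.1.le
    · have hd := hδ' (show dist r 0 < δ by
        rw [Real.dist_eq, sub_zero, abs_of_pos hr.1]; exact hr.2)
      rw [hg0, Real.dist_eq] at hd
      have h1 : |b - 1| / 2 ≤ |g r| := by
        have h2 := abs_sub_abs_le_abs_sub (b - 1) (g r)
        rw [abs_sub_comm (g r)] at hd
        linarith
      calc (|b - 1| / 2) ^ 2 ≤ |g r| ^ 2 := pow_le_pow_left₀ hbne.le h1 2
        _ = g r ^ 2 := sq_abs _
  have lower : ∫⁻ r in Ioo (0:ℝ) δ, ENNReal.ofReal ((|b - 1| / 2) ^ 2 * r⁻¹) ≤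
      ∫⁻ r in Ioi (0 : ℝ), ENNReal.ofReal (g r ^ 2 / r) := by
    refine le_trans ?_ (lintegral_mono_set (Ioo_subset_Ioi_self : Ioo (0:ℝ) δ ⊆ Ioi 0))
    apply setLIntegral_mono_ae
    · exact (Measurable.ennreal_ofReal (by fun_prop) :
        Measurable fun r : ℝ => ENNReal.ofReal (g r ^ 2 / r)).aemeasurable
    · filter_upwards with r hr
      exact ENNReal.ofReal_le_ofReal (by rw [← div_eq_mul_inv]; exact key r hr)
  have top : ∫⁻ r in Ioo (0:ℝ) δ, ENNReal.ofReal ((|b - 1| / 2) ^ 2 * r⁻¹) = ⊤ := by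
    have : ∀ r : ℝ, ENNReal.ofReal ((|b - 1| / 2) ^ 2 * r⁻¹) =
        ENNReal.ofReal ((|b - 1| / 2) ^ 2) * ENNReal.ofReal r⁻¹ := fun r =>
      ENNReal.ofReal_mul (by positivity)
    simp_rw [this]
    rw [lintegral_const_mul _ measurable_inv.ennreal_ofReal, lintegral_inv_Ioo_top hδ,
      ENNReal.mul_top]
    simp only [ne_eq, ENNReal.ofReal_eq_zero, not_le]
    positivity
  exact top_le_iff.1 (top ▸ lower)
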